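/- Let ρ > 0 and k ≥ 1. Let {P̃_1,…,P̃_k} be a partition of P into nonempty clusters; for each i let μ_i ∈ ℝ^d attain opt(P̃_i,1) and let p*_i ∈ P̃_i maximize w_p·‖p−μ_i‖^z over P̃_i. Suppose there exist real numbers A and a_1,…,a_k with A ≤ Σ_{i=1}^k a_i and a_i ≤ c(P̃_i,{μ_i,p*_i}) for every i. Define ε := ρ·((Σ_{i=1}^k c(P̃_i,{μ_i}) − A)/w_min)^{1/z} (well-defined since A ≤ Σ_i a_i ≤ Σ_i c(P̃_i,{μ_i})). Then for every set X of models and every per-point cost function cost : ℝ^d × X → ℝ with cost(p,x) ≥ 1 for all p and x, and ρ-Lipschitz in the point argument, S = {μ_1,…,μ_k} with weights u_i := Σ_{p∈P̃_i} w_p is an ε-coreset for P w.r.t. the sum cost and an ε-coreset w.r.t. the maximum cost. (Corollary 3) -/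

import Mathlib

open scoped Classical

/-- Points of `ℝ^d` with the Euclidean norm. -/
abbrev Pt (d : ℕ) := EuclideanSpace ℝ (Fin d)

/-- Weighted clustering cost `c(P,Q) = Σ_{p∈P} w_p · (min_{q∈Q} ‖p−q‖)^z`
(the minimum is expressed as an infimum, which agrees with the minimum
for nonempty finite `Q`). -/
noncomputable def cCost {d : ℕ} (z : ℝ) (w : Pt d → ℝ) (P Q : Finset (Pt d)) : ℝ :=
  ∑ p ∈ P, w p * (sInf ((fun q => dist p q) '' (Q : Set (Pt d)))) ^ z

/-- Optimal `k`-clustering cost `opt(P,k) = inf { c(P,Q) : |Q| = k }`. -/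
noncomputable def optCost {d : ℕ} (z : ℝ) (w : Pt d → ℝ) (P : Finset (Pt d)) (k : ℕ) : ℝ :=
  sInf { r : ℝ | ∃ Q : Finset (Pt d), Q.card = k ∧ r = cCost z w P Q }

/-- Corollary 3: with the suboptimal-clustering data of Theorem 2 and
`ε := ρ·((Σ_i c(Pc i,{μ i}) − A)/w_min)^{1/z}`, for every model set `X` and every
per-point cost that is `≥ 1` and `ρ`-Lipschitz in the point, `{μ i}` with weights
`Σ_{p∈Pc i} w_p` is an `ε`-coreset for `P` w.r.t. the sum cost and the maximum cost. -/
theorem corollary3 {d : ℕ} (z : ℝ) (hz : 0 < z)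
    (P : Finset (Pt d)) (hP : P.Nonempty)
    (w : Pt d → ℝ) (hw : ∀ p ∈ P, 0 < w p)
    (k : ℕ) (hk : 0 < k)
    (Pc : Fin k → Finset (Pt d))
    (hne : ∀ i, (Pc i).Nonempty)
    (hdisj : ∀ i j, i ≠ j → Disjoint (Pc i) (Pc j))
    (hcover : P = Finset.univ.biUnion Pc)
    (μ : Fin k → Pt d) (hμ : ∀ i, cCost z w (Pc i) {μ i} = optCost z w (Pc i) 1)
    (pstar : Fin k → Pt d) (hpstarM : ∀ i, pstar i ∈ Pc i)
    (hpstar : ∀ i, ∀ p ∈ Pc i,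
      w p * dist p (μ i) ^ z ≤ w (pstar i) * dist (pstar i) (μ i) ^ z)
    (A : ℝ) (a : Fin k → ℝ)
    (hA : A ≤ ∑ i, a i)
    (ha : ∀ i, a i ≤ cCost z w (Pc i) {μ i, pstar i})
    (ρ : ℝ) (hρ : 0 < ρ)
    (ε : ℝ)
    (hεdef : ε = ρ * (((∑ i, cCost z w (Pc i) {μ i}) - A) / P.inf' hP w) ^ (1 / z))
    (X : Type*) (cost : Pt d → X → ℝ)
    (hc1 : ∀ p x, 1 ≤ cost p x)
    (hlip : ∀ (x : X) (p p' : Pt d), |cost p x - cost p' x| ≤ ρ * dist p p') :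
    ∀ x : X,
      ((1 - ε) * (∑ p ∈ P, w p * cost p x) ≤ (∑ i, (∑ p ∈ Pc i, w p) * cost (μ i) x) ∧
       (∑ i, (∑ p ∈ Pc i, w p) * cost (μ i) x) ≤ (1 + ε) * (∑ p ∈ P, w p * cost p x)) ∧
      ((1 - ε) * P.sup' hP (fun p => cost p x)
          ≤ Finset.univ.sup' (Finset.univ_nonempty_iff.mpr ⟨⟨0, hk⟩⟩) (fun i => cost (μ i) x) ∧
       Finset.univ.sup' (Finset.univ_nonempty_iff.mpr ⟨⟨0, hk⟩⟩) (fun i => cost (μ i) x)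
          ≤ (1 + ε) * P.sup' hP (fun p => cost p x)) := by
  have hwmin_pos : 0 < P.inf' hP w := by
    rw [Finset.lt_inf'_iff]; exact hw
  have hmemP : ∀ i, ∀ p ∈ Pc i, p ∈ P := by
    intro i p hp
    rw [hcover]; exact Finset.mem_biUnion.2 ⟨i, Finset.mem_univ i, hp⟩
  have hsing : ∀ (S : Finset (Pt d)) (q : Pt d),
      cCost z w S {q} = ∑ p ∈ S, w p * dist p q ^ z := by
    intro S q
    unfold cCost
    refine Finset.sum_congr rfl fun p hp => ?_
    congr 2
    rw [Finset.coe_singleton, Set.image_singleton, csInf_singleton]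
  set D := (∑ i, cCost z w (Pc i) {μ i}) - A with hD
  -- pair cost bound
  have hpair : ∀ i, cCost z w (Pc i) {μ i, pstar i}
      ≤ cCost z w (Pc i) {μ i} - w (pstar i) * dist (pstar i) (μ i) ^ z := by
    intro i
    have hL : cCost z w (Pc i) {μ i, pstar i}
        = ∑ p ∈ Pc i, w p * (min (dist p (μ i)) (dist p (pstar i))) ^ z := by
      unfold cCost
      refine Finset.sum_congr rfl fun p _ => ?_
      congr 2
      rw [Finset.coe_insert, Finset.coe_singleton, Set.image_pair, csInf_pair]
    rw [hL, hsing,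
      ← Finset.add_sum_erase _ (fun p => w p * (min (dist p (μ i)) (dist p (pstar i))) ^ z)
        (hpstarM i),
      ← Finset.add_sum_erase _ (fun p => w p * dist p (μ i) ^ z) (hpstarM i)]
    have h1 : w (pstar i) * (min (dist (pstar i) (μ i)) (dist (pstar i) (pstar i))) ^ z = 0 := by
      rw [dist_self, min_eq_right dist_nonneg, Real.zero_rpow hz.ne', mul_zero]
    have h2 : ∑ p ∈ (Pc i).erase (pstar i), w p * (min (dist p (μ i)) (dist p (pstar i))) ^ z
        ≤ ∑ p ∈ (Pc i).erase (pstar i), w p * dist p (μ i) ^ z := by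
      refine Finset.sum_le_sum fun p hp => ?_
      have hpP : p ∈ P := hmemP i p (Finset.mem_of_mem_erase hp)
      refine mul_le_mul_of_nonneg_left ?_ (hw p hpP).le
      exact Real.rpow_le_rpow (le_min dist_nonneg dist_nonneg) (min_le_left _ _) hz.le
    rw [h1]
    linarith
  have hpsnn : ∀ i, 0 ≤ w (pstar i) * dist (pstar i) (μ i) ^ z := fun i =>
    mul_nonneg (hw _ (hmemP i _ (hpstarM i))).le (Real.rpow_nonneg dist_nonneg _)
  have hca : ∀ i, 0 ≤ cCost z w (Pc i) {μ i} - a i := fun i => by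
    have := ha i; have := hpair i; have := hpsnn i; linarith
  -- per-point bound by D
  have hkey : ∀ i, ∀ p ∈ Pc i, w p * dist p (μ i) ^ z ≤ D := by
    intro i p hp
    have h1 : w p * dist p (μ i) ^ z ≤ cCost z w (Pc i) {μ i} - a i := by
      have := hpstar i p hp; have := hpair i; have := ha i; linarith
    have h2 : cCost z w (Pc i) {μ i} - a i
        ≤ ∑ j, (cCost z w (Pc j) {μ j} - a j) :=
      Finset.single_le_sum (fun j _ => hca j) (Finset.mem_univ i)
    have h3 : ∑ j, (cCost z w (Pc j) {μ j} - a j) ≤ D := by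
      rw [Finset.sum_sub_distrib, hD]; linarith
    linarith
  have hD0 : 0 ≤ D := le_trans (hca ⟨0, hk⟩) (le_trans
    (Finset.single_le_sum (fun j _ => hca j) (Finset.mem_univ (⟨0, hk⟩ : Fin k))) (by
      rw [Finset.sum_sub_distrib, hD]; linarith))
  have hε0 : 0 ≤ ε := by
    rw [hεdef]
    exact mul_nonneg hρ.le (Real.rpow_nonneg (div_nonneg hD0 hwmin_pos.le) _)
  -- distance bound
  have hdist : ∀ i, ∀ p ∈ Pc i, ρ * dist p (μ i) ≤ ε := by
    intro i p hp
    have hwp : P.inf' hP w ≤ w p := Finset.inf'_le w (hmemP i p hp)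
    have h1 : dist p (μ i) ^ z ≤ D / P.inf' hP w := by
      rw [le_div_iff₀ hwmin_pos]
      calc dist p (μ i) ^ z * P.inf' hP w ≤ w p * dist p (μ i) ^ z := by
            rw [mul_comm]
            exact mul_le_mul_of_nonneg_right hwp (Real.rpow_nonneg dist_nonneg _)
        _ ≤ D := hkey i p hp
    have h2 : dist p (μ i) ≤ (D / P.inf' hP w) ^ (1 / z) := by
      have := Real.rpow_le_rpow (Real.rpow_nonneg dist_nonneg z) h1
        (le_of_lt (by positivity : (0:ℝ) < 1 / z))
      rw [one_div]
      rwa [one_div, Real.rpow_rpow_inv dist_nonneg hz.ne'] at this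
    calc ρ * dist p (μ i) ≤ ρ * (D / P.inf' hP w) ^ (1 / z) :=
          mul_le_mul_of_nonneg_left h2 hρ.le
      _ = ε := hεdef.symm
  -- cost bounds
  have hcb : ∀ (x : X) i, ∀ p ∈ Pc i,
      (1 - ε) * cost p x ≤ cost (μ i) x ∧ cost (μ i) x ≤ (1 + ε) * cost p x := by
    intro x i p hp
    have habs : |cost (μ i) x - cost p x| ≤ ε := by
      refine le_trans (hlip x (μ i) p) ?_
      rw [dist_comm]
      exact hdist i p hp
    rw [abs_le] at habs
    have hεc : ε ≤ ε * cost p x := le_mul_of_one_le_right hε0 (hc1 p x)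
    constructor <;> nlinarith [habs.1, habs.2]
  have hsplit : ∀ g : Pt d → ℝ, ∑ p ∈ P, g p = ∑ i, ∑ p ∈ Pc i, g p := by
    intro g
    rw [hcover, Finset.sum_biUnion]
    intro i _ j _ hij
    exact hdisj i j hij
  intro x
  refine ⟨⟨?_, ?_⟩, ?_, ?_⟩
  · rw [hsplit (fun p => w p * cost p x), Finset.mul_sum]
    refine Finset.sum_le_sum fun i _ => ?_
    rw [Finset.mul_sum, Finset.sum_mul]
    refine Finset.sum_le_sum fun p hp => ?_
    have := (hcb x i p hp).1
    have hwp := (hw p (hmemP i p hp)).le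
    nlinarith
  · rw [hsplit (fun p => w p * cost p x), Finset.mul_sum]
    refine Finset.sum_le_sum fun i _ => ?_
    rw [Finset.mul_sum, Finset.sum_mul]
    refine Finset.sum_le_sum fun p hp => ?_
    have := (hcb x i p hp).2
    have hwp := (hw p (hmemP i p hp)).le
    nlinarith
  · obtain ⟨p0, hp0P, hp0⟩ := Finset.exists_mem_eq_sup' hP (fun p => cost p x)
    have : p0 ∈ Finset.univ.biUnion Pc := hcover ▸ hp0P
    obtain ⟨i, _, hp0i⟩ := Finset.mem_biUnion.1 this
    calc (1 - ε) * P.sup' hP (fun p => cost p x) = (1 - ε) * cost p0 x := by rw [hp0]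
      _ ≤ cost (μ i) x := (hcb x i p0 hp0i).1
      _ ≤ _ := Finset.le_sup' (fun i => cost (μ i) x) (Finset.mem_univ i)
  · refine Finset.sup'_le _ _ fun i _ => ?_
    obtain ⟨p, hp⟩ := hne i
    calc cost (μ i) x ≤ (1 + ε) * cost p x := (hcb x i p hp).2
      _ ≤ (1 + ε) * P.sup' hP (fun p => cost p x) := by
          refine mul_le_mul_of_nonneg_left ?_ (by linarith)
          exact Finset.le_sup' (fun p => cost p x) (hmemP i p hp)
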